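/- Suppose P_{XY} and P_{X'Y'Z'} are distributions on finite sets with ‖P_{XY} - P_{X'Y'}‖₁ ≤ ε, and P_{XY}(x, y*) = α·P_X(x) for all x, where ε = ‖P_{X'Y'Z'} - P_{XY}·P_{Z'|X'}‖₁. Then ‖P_{X'Z'|Y'=y*} - P_{X'Z'}‖₁ ≤ (11/α)·‖P_{X'Y'Z'} - P_{XY}·P_{Z'|X'}‖₁. -/

import Mathlib

/-- Corollary of the anchoring lemma. If `‖P_{XY} - Q_{XY}‖₁ ≤ ε` where
`ε = ‖Q_{XYZ} - P_{XY}·Q_{Z|X}‖₁`, and `P` is anchored at `y*` with probability `α`, then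
`‖Q_{XZ|y*} - Q_{XZ}‖₁ ≤ (11/α)·ε`. -/
theorem stmt4 {X Y Z : Type*} [Fintype X] [Fintype Y] [Fintype Z]
    (P : X × Y → ℝ) (Q : X × Y × Z → ℝ) (ystar : Y) (α ε : ℝ)
    (hP0 : ∀ b, 0 ≤ P b) (hP1 : ∑ b, P b = 1)
    (hQ0 : ∀ a, 0 ≤ Q a) (hQ1 : ∑ a, Q a = 1)
    (hα : 0 < α)
    (hanchor : ∀ x, P (x, ystar) = α * ∑ y, P (x, y))
    (hε : ε = ∑ a : X × Y × Z,
        |Q a - P (a.1, a.2.1) *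
          ((∑ y, Q (a.1, y, a.2.2)) / (∑ y, ∑ z, Q (a.1, y, z)))|)
    (hεpos : 0 < ε)
    (hclose : ∑ b : X × Y, |P b - ∑ z, Q (b.1, b.2, z)| ≤ ε)
    (hystar : 0 < ∑ x, ∑ z, Q (x, ystar, z)) :
    ∑ c : X × Z,
        |Q (c.1, ystar, c.2) / (∑ x, ∑ z, Q (x, ystar, z)) - ∑ y, Q (c.1, y, c.2)|
      ≤ (11 / α) * ε := by
  classical
  set S : ℝ := ∑ x, ∑ z, Q (x, ystar, z) with hSdef
  have hS0 : 0 < S := hystar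
  set R : X → Z → ℝ := fun x z => ∑ y, Q (x, y, z) with hRdef
  set A : X → ℝ := fun x => ∑ y, ∑ z, Q (x, y, z) with hAdef
  set PX : X → ℝ := fun x => ∑ y, P (x, y) with hPXdef
  have hR0 : ∀ x z, 0 ≤ R x z := fun x z => Finset.sum_nonneg fun y _ => hQ0 _
  have hA0 : ∀ x, 0 ≤ A x :=
    fun x => Finset.sum_nonneg fun y _ => Finset.sum_nonneg fun z _ => hQ0 _
  have hRA : ∀ x, ∑ z, R x z = A x := fun x => Finset.sum_comm
  have hanchor' : ∀ x, P (x, ystar) = α * PX x := hanchor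
  have hQ1' : ∑ x, ∑ y, ∑ z, Q (x, y, z) = 1 := by
    rw [← hQ1]
    simp only [Fintype.sum_prod_type]
  have hAsum : ∑ x, A x = 1 := hQ1'
  have hPXsum : ∑ x, PX x = 1 := by
    rw [← hP1]; exact (Fintype.sum_prod_type P).symm
  have hRsum1 : ∑ x, ∑ z, R x z = 1 := by
    rw [Finset.sum_congr rfl fun x _ => hRA x, hAsum]
  have hPystar : ∑ x, P (x, ystar) = α := by
    calc ∑ x, P (x, ystar) = ∑ x, α * PX x := Finset.sum_congr rfl fun x _ => hanchor' x
    _ = α * ∑ x, PX x := (Finset.mul_sum _ _ _).symm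
    _ = α := by rw [hPXsum, mul_one]
  have hαle : α ≤ 1 := by
    rw [← hPystar, ← hP1, Fintype.sum_prod_type]
    exact Finset.sum_le_sum fun x _ =>
      Finset.single_le_sum (fun y _ => hP0 _) (Finset.mem_univ ystar)
  have hAzero : ∀ x, A x = 0 → ∀ y z, Q (x, y, z) = 0 := by
    intro x hx y z
    have h1 : ∑ y, ∑ z, Q (x, y, z) = 0 := hx
    have h2 : ∑ z, Q (x, y, z) = 0 :=
      (Finset.sum_eq_zero_iff_of_nonneg
        (fun y _ => Finset.sum_nonneg fun z _ => hQ0 _)).mp h1 y (Finset.mem_univ y)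
    exact (Finset.sum_eq_zero_iff_of_nonneg (fun z _ => hQ0 _)).mp h2 z (Finset.mem_univ z)
  -- marginal closeness in X
  have hclose' : ∑ x, ∑ y, |P (x, y) - ∑ z, Q (x, y, z)| ≤ ε := by
    have h := hclose
    simp only [Fintype.sum_prod_type] at h
    exact h
  have hmarg : ∑ x, |PX x - A x| ≤ ε := by
    refine le_trans (Finset.sum_le_sum fun x _ => ?_) hclose'
    have h1 : PX x - A x = ∑ y, (P (x, y) - ∑ z, Q (x, y, z)) := by
      simp only [hPXdef, hAdef, Finset.sum_sub_distrib]
    rw [h1]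
    exact Finset.abs_sum_le_sum_abs _ _
  -- ε as a triple sum
  have hε' : ∑ x, ∑ y, ∑ z, |Q (x, y, z) - P (x, y) * (R x z / A x)| = ε := by
    rw [hε]
    simp only [Fintype.sum_prod_type]
    rfl
  have hfirst : ∑ x, ∑ z, |Q (x, ystar, z) - P (x, ystar) * (R x z / A x)| ≤ ε := by
    rw [← hε']
    refine Finset.sum_le_sum fun x _ => ?_
    exact Finset.single_le_sum
      (f := fun y => ∑ z, |Q (x, y, z) - P (x, y) * (R x z / A x)|)
      (fun y _ => Finset.sum_nonneg fun z _ => abs_nonneg _) (Finset.mem_univ ystar)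
  have hsecond : ∀ x, ∑ z, |P (x, ystar) * (R x z / A x) - α * R x z|
      ≤ α * |PX x - A x| := by
    intro x
    by_cases hx : A x = 0
    · have hz : ∀ z, R x z = 0 := by
        intro z
        simp only [hRdef]
        exact Finset.sum_eq_zero fun y _ => hAzero x hx y z
      have hzz : ∀ z, |P (x, ystar) * (R x z / A x) - α * R x z| = 0 := by
        intro z; rw [hz z]; simp
      rw [Finset.sum_congr rfl fun z _ => hzz z, Finset.sum_const_zero]
      positivity
    · have hzeq : ∀ z, |P (x, ystar) * (R x z / A x) - α * R x z|
          = α * |PX x - A x| * (R x z / A x) := by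
        intro z
        have h1 : P (x, ystar) * (R x z / A x) - α * R x z
            = α * (PX x - A x) * (R x z / A x) := by
          rw [hanchor' x]
          field_simp
        rw [h1, abs_mul, abs_mul, abs_of_pos hα,
          abs_of_nonneg (div_nonneg (hR0 x z) (hA0 x))]
      refine le_of_eq ?_
      calc ∑ z, |P (x, ystar) * (R x z / A x) - α * R x z|
          = ∑ z, α * |PX x - A x| * (R x z / A x) :=
            Finset.sum_congr rfl fun z _ => hzeq z
        _ = α * |PX x - A x| * ((∑ z, R x z) / A x) := by
            rw [Finset.sum_div, Finset.mul_sum]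
        _ = α * |PX x - A x| := by rw [hRA x, div_self hx, mul_one]
  have hε1 : ∑ x, ∑ z, |Q (x, ystar, z) - α * R x z| ≤ 2 * ε := by
    have step : ∀ x, ∑ z, |Q (x, ystar, z) - α * R x z|
        ≤ (∑ z, |Q (x, ystar, z) - P (x, ystar) * (R x z / A x)|) + α * |PX x - A x| := by
      intro x
      refine le_trans ?_ (add_le_add_right (hsecond x) _)
      rw [← Finset.sum_add_distrib]
      exact Finset.sum_le_sum fun z _ => abs_sub_le _ _ _
    calc ∑ x, ∑ z, |Q (x, ystar, z) - α * R x z|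
        ≤ ∑ x, ((∑ z, |Q (x, ystar, z) - P (x, ystar) * (R x z / A x)|)
            + α * |PX x - A x|) := Finset.sum_le_sum fun x _ => step x
      _ = (∑ x, ∑ z, |Q (x, ystar, z) - P (x, ystar) * (R x z / A x)|)
            + α * ∑ x, |PX x - A x| := by rw [Finset.sum_add_distrib, Finset.mul_sum]
      _ ≤ ε + α * ε := add_le_add hfirst (mul_le_mul_of_nonneg_left hmarg hα.le)
      _ ≤ 2 * ε := by nlinarith
  have hSα : |S - α| ≤ 2 * ε := by
    have h2 : ∀ x, ∑ z, (Q (x, ystar, z) - α * R x z)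
        = (∑ z, Q (x, ystar, z)) - α * ∑ z, R x z := by
      intro x; rw [Finset.sum_sub_distrib, Finset.mul_sum]
    have h1 : ∑ x, ∑ z, (Q (x, ystar, z) - α * R x z) = S - α := by
      rw [Finset.sum_congr rfl fun x _ => h2 x, Finset.sum_sub_distrib, ← hSdef,
        ← Finset.mul_sum, hRsum1, mul_one]
    calc |S - α| = |∑ x, ∑ z, (Q (x, ystar, z) - α * R x z)| := by rw [h1]
      _ ≤ ∑ x, |∑ z, (Q (x, ystar, z) - α * R x z)| := Finset.abs_sum_le_sum_abs _ _
      _ ≤ ∑ x, ∑ z, |Q (x, ystar, z) - α * R x z| :=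
          Finset.sum_le_sum fun x _ => Finset.abs_sum_le_sum_abs _ _
      _ ≤ 2 * ε := hε1
  have hmain : ∑ x, ∑ z, |Q (x, ystar, z) / S - R x z| ≤ (11 / α) * ε := by
    rcases le_or_gt (7 * α / 22) ε with hcase | hcase
    · -- big ε : LHS ≤ 2 ≤ RHS
      have hb : ∑ x, ∑ z, |Q (x, ystar, z) / S - R x z| ≤ 2 := by
        calc ∑ x, ∑ z, |Q (x, ystar, z) / S - R x z|
            ≤ ∑ x, ∑ z, (Q (x, ystar, z) / S + R x z) := by
              refine Finset.sum_le_sum fun x _ => Finset.sum_le_sum fun z _ => ?_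
              have ha : 0 ≤ Q (x, ystar, z) / S := div_nonneg (hQ0 _) hS0.le
              have hb' : 0 ≤ R x z := hR0 x z
              rw [abs_sub_le_iff]
              constructor <;> linarith
          _ = (∑ x, ∑ z, Q (x, ystar, z)) / S + ∑ x, ∑ z, R x z := by
              rw [Finset.sum_div, ← Finset.sum_add_distrib]
              refine Finset.sum_congr rfl fun x _ => ?_
              rw [Finset.sum_div, ← Finset.sum_add_distrib]
          _ = 2 := by rw [← hSdef, div_self hS0.ne', hRsum1]; norm_num
      refine hb.trans ?_
      rw [div_mul_eq_mul_div, le_div_iff₀ hα]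
      nlinarith
    · -- small ε : S is large
      have hSlb : 4 * α / 11 ≤ S := by
        have h := abs_le.mp hSα
        linarith [h.1]
      have hpt : ∀ x z, |Q (x, ystar, z) / S - R x z|
          ≤ (|Q (x, ystar, z) - α * R x z| + |S - α| * R x z) / S := by
        intro x z
        have h1 : Q (x, ystar, z) / S - R x z
            = (Q (x, ystar, z) - α * R x z + (α - S) * R x z) / S := by
          field_simp
          ring
        rw [h1, abs_div, abs_of_pos hS0]
        gcongr
        refine (abs_add_le _ _).trans ?_
        rw [abs_mul, abs_of_nonneg (hR0 x z),
          show |α - S| = |S - α| from abs_sub_comm α S]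
      calc ∑ x, ∑ z, |Q (x, ystar, z) / S - R x z|
          ≤ ∑ x, ∑ z, (|Q (x, ystar, z) - α * R x z| + |S - α| * R x z) / S :=
            Finset.sum_le_sum fun x _ => Finset.sum_le_sum fun z _ => hpt x z
        _ = ((∑ x, ∑ z, |Q (x, ystar, z) - α * R x z|)
              + |S - α| * ∑ x, ∑ z, R x z) / S := by
            simp only [add_div, Finset.sum_div, Finset.sum_add_distrib, Finset.mul_sum,
              mul_div_assoc]
        _ ≤ (2 * ε + 2 * ε * 1) / S := by
            have h1 : |S - α| * ∑ x, ∑ z, R x z ≤ 2 * ε * 1 := by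
              rw [hRsum1]; exact mul_le_mul_of_nonneg_right hSα (by norm_num)
            exact (div_le_div_iff_of_pos_right hS0).mpr (add_le_add hε1 h1)
        _ ≤ (11 / α) * ε := by
            rw [div_le_iff₀ hS0, div_mul_eq_mul_div, div_mul_eq_mul_div, le_div_iff₀ hα]
            nlinarith [mul_le_mul_of_nonneg_left hSlb hεpos.le]
  calc ∑ c : X × Z,
      |Q (c.1, ystar, c.2) / S - ∑ y, Q (c.1, y, c.2)|
      = ∑ x, ∑ z, |Q (x, ystar, z) / S - R x z| :=
        Fintype.sum_prod_type (fun c : X × Z => |Q (c.1, ystar, c.2) / S - R c.1 c.2|)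
    _ ≤ (11 / α) * ε := hmain
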